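/- (Main Lemma) Let τ be an injective map on dyadic intervals such that ⟦τ(E)⟧ ≤ M whenever E is a collection of pairwise disjoint dyadic intervals. Then for every A ≥ 1 and every dyadic interval I₀ there exists a collection C of pairwise disjoint dyadic intervals contained in I₀ such that: (i) Σ_{L∈C} |L| ≤ M|I₀|/A; and (ii) setting L = { I dyadic : I ⊆ I₀ and I is not contained in any member of C }, for every I ∈ L one has |τ(I)|/|I| ≤ A(|τ(L)*| + |τ(C)*|)/|I₀|. -/

import Mathlib

open MeasureTheory

/-- A dyadic interval `[k/2^n, (k+1)/2^n)` of `[0,1)`. -/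
structure DI where
  n : ℕ
  k : ℕ
  hk : k < 2 ^ n

namespace DI

/-- The underlying set of a dyadic interval. -/
def carrier (I : DI) : Set ℝ := Set.Ico ((I.k : ℝ) / 2 ^ I.n) ((I.k + 1 : ℝ) / 2 ^ I.n)

/-- The length `|I| = 2^{-n}` of a dyadic interval. -/
noncomputable def len (I : DI) : ENNReal := ENNReal.ofReal ((2 : ℝ)⁻¹ ^ I.n)

end DI

/-- The Carleson sum `∑_{I ∈ L, I ⊆ J} |I|`. -/
noncomputable def carlesonSum (L : Set DI) (J : DI) : ENNReal :=
  ∑' I : {I : DI // I ∈ L ∧ I.carrier ⊆ J.carrier}, I.1.len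

/-- `L` satisfies the `M`-Carleson condition. -/
def CarlesonLE (L : Set DI) (M : ENNReal) : Prop :=
  ∀ J : DI, carlesonSum L J ≤ M * J.len

/-- The Carleson constant `⟦L⟧ = sup_J (1/|J|) ∑_{I ∈ L, I ⊆ J} |I|`. -/
noncomputable def carlesonConst (L : Set DI) : ENNReal :=
  ⨆ J : DI, carlesonSum L J / J.len

/-- The square of the dyadic BMO norm of `x = ∑ x_I h_I`,
`‖x‖² = sup_J (1/|J|) ∑_{I ⊆ J} x_I² |I|`, in terms of the Haar coefficients. -/
noncomputable def bmoSq (x : DI → ℝ) : ENNReal :=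
  ⨆ J : DI, (∑' I : {I : DI // I.carrier ⊆ J.carrier},
      ENNReal.ofReal ((x I.1) ^ 2) * I.1.len) / J.len

/-- `|L*|`: the Lebesgue measure of the set covered by the collection `L`. -/
noncomputable def covMeas (L : Set DI) : ENNReal := volume (⋃ I ∈ L, I.carrier)

/-- `y` is the coefficient function of `Tx` where `T h_I = h_{τ(I)}` and `x` has
coefficients `x_I`. -/
def HaarCompat (τ : DI → DI) (x y : DI → ℝ) : Prop :=
  (∀ I, y (τ I) = x I) ∧ ∀ J, J ∉ Set.range τ → y J = 0

/-- The maximal elements of a collection of dyadic intervals, under inclusion. -/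
def maxSet (S : Set DI) : Set DI :=
  {I | I ∈ S ∧ ∀ K ∈ S, I.carrier ⊆ K.carrier → I = K}



namespace DI

instance : Countable DI := by
  have h : Function.Injective (fun I : DI => (I.n, I.k)) := by
    intro ⟨n, k, h⟩ ⟨n', k', h'⟩ hh
    simp only [Prod.mk.injEq] at hh
    obtain ⟨rfl, rfl⟩ := hh; rfl
  exact h.countable

lemma lt_ub (I : DI) : (I.k : ℝ) / 2 ^ I.n < (I.k + 1 : ℝ) / 2 ^ I.n := by
  have h2 : (0:ℝ) < 2 ^ I.n := by positivity
  exact div_lt_div_of_pos_right (by linarith) h2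

lemma carrier_nonempty (I : DI) : I.carrier.Nonempty :=
  Set.nonempty_Ico.2 I.lt_ub

lemma volume_carrier (I : DI) : volume I.carrier = I.len := by
  rw [carrier, Real.volume_Ico, len]
  congr 1
  rw [div_sub_div_same, inv_pow, ← one_div]
  ring_nf

lemma len_ne_zero (I : DI) : I.len ≠ 0 := by
  rw [len]
  exact (ENNReal.ofReal_pos.2 (by positivity)).ne'

lemma len_ne_top (I : DI) : I.len ≠ ⊤ := ENNReal.ofReal_ne_top

lemma len_pos (I : DI) : 0 < I.len := pos_iff_ne_zero.2 I.len_ne_zero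

lemma measurableSet_carrier (I : DI) : MeasurableSet I.carrier := measurableSet_Ico

lemma carrier_subset_Ico01 (I : DI) : I.carrier ⊆ Set.Ico (0:ℝ) 1 := by
  rw [carrier]
  apply Set.Ico_subset_Ico
  · positivity
  · rw [div_le_one (by positivity)]
    have := I.hk
    push_cast
    exact_mod_cast Nat.succ_le_of_lt this

lemma n_le_of_subset {I K : DI} (h : I.carrier ⊆ K.carrier) : K.n ≤ I.n := by
  rw [carrier, carrier, Set.Ico_subset_Ico_iff I.lt_ub] at h
  obtain ⟨h1, h2⟩ := h
  have hw : (1:ℝ) / 2 ^ I.n ≤ 1 / 2 ^ K.n := by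
    have e1 : ((I.k:ℝ) + 1) / 2 ^ I.n - (I.k:ℝ) / 2 ^ I.n = 1 / 2 ^ I.n := by
      rw [div_sub_div_same]; ring_nf
    have e2 : ((K.k:ℝ) + 1) / 2 ^ K.n - (K.k:ℝ) / 2 ^ K.n = 1 / 2 ^ K.n := by
      rw [div_sub_div_same]; ring_nf
    linarith
  have h3 := (div_le_div_iff₀ (by positivity) (by positivity)).1 hw
  rw [one_mul, one_mul] at h3
  exact (pow_le_pow_iff_right₀ (by norm_num : (1:ℝ) < 2)).1 h3

lemma eq_of_subset_of_n_le {I K : DI} (h : I.carrier ⊆ K.carrier) (hn : I.n ≤ K.n) : I = K := by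
  have hn' : K.n = I.n := le_antisymm (n_le_of_subset h) hn
  rw [carrier, carrier, Set.Ico_subset_Ico_iff I.lt_ub, hn'] at h
  obtain ⟨h1, h2⟩ := h
  have h2pos : (0:ℝ) < 2 ^ I.n := by positivity
  have hk1 : (K.k:ℝ) ≤ I.k := by
    rwa [div_le_div_iff_of_pos_right h2pos] at h1
  have hk2 : (I.k:ℝ) + 1 ≤ (K.k:ℝ) + 1 := by
    rwa [div_le_div_iff_of_pos_right h2pos] at h2
  have hr : (I.k:ℝ) = K.k := le_antisymm (by linarith) hk1
  have : I.k = K.k := by exact_mod_cast hr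
  obtain ⟨n, k, hk⟩ := I; obtain ⟨n', k', hk'⟩ := K
  simp only at hn' this
  subst hn' this
  rfl

end DI

lemma subset_of_not_disjoint_of_n_le {I K : DI} (h : K.n ≤ I.n)
    (hnd : ¬ Disjoint I.carrier K.carrier) : I.carrier ⊆ K.carrier := by
  rw [Set.not_disjoint_iff] at hnd
  obtain ⟨x, hxI, hxK⟩ := hnd
  obtain ⟨d, hd⟩ : ∃ d, I.n = K.n + d := ⟨I.n - K.n, by omega⟩
  rw [DI.carrier, Set.mem_Ico] at hxI hxK
  have pI : (0:ℝ) < 2 ^ I.n := by positivity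
  have pK : (0:ℝ) < 2 ^ K.n := by positivity
  -- integer claims
  have c1 : K.k * 2 ^ d ≤ I.k := by
    have hr : (K.k:ℝ) / 2 ^ K.n < ((I.k:ℝ) + 1) / 2 ^ I.n := lt_of_le_of_lt hxK.1 hxI.2
    rw [div_lt_div_iff₀ pK pI] at hr
    have hn : (K.k:ℝ) * 2 ^ I.n = (K.k * 2 ^ d : ℕ) * 2 ^ K.n := by
      push_cast [hd, pow_add]; ring
    rw [hn] at hr
    have : ((K.k * 2 ^ d : ℕ) : ℝ) < (I.k:ℝ) + 1 := by
      have := (mul_lt_mul_iff_of_pos_right pK).1 hr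
      linarith
    have : (K.k * 2 ^ d : ℕ) < I.k + 1 := by exact_mod_cast this
    omega
  have c2 : I.k + 1 ≤ (K.k + 1) * 2 ^ d := by
    have hr : (I.k:ℝ) / 2 ^ I.n < ((K.k:ℝ) + 1) / 2 ^ K.n := lt_of_le_of_lt hxI.1 hxK.2
    rw [div_lt_div_iff₀ pI pK] at hr
    have hn : ((K.k:ℝ) + 1) * 2 ^ I.n = ((K.k + 1) * 2 ^ d : ℕ) * 2 ^ K.n := by
      push_cast [hd, pow_add]; ring
    rw [hn] at hr
    have : (I.k:ℝ) < ((K.k + 1) * 2 ^ d : ℕ) := (mul_lt_mul_iff_of_pos_right pK).1 hr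
    have : I.k < (K.k + 1) * 2 ^ d := by exact_mod_cast this
    omega
  -- conclude
  rw [DI.carrier, DI.carrier]
  apply Set.Ico_subset_Ico
  · rw [div_le_div_iff₀ pK pI]
    have : ((K.k * 2 ^ d : ℕ) : ℝ) * 2 ^ K.n ≤ (I.k:ℝ) * 2 ^ K.n := by
      have : ((K.k * 2 ^ d : ℕ) : ℝ) ≤ (I.k : ℝ) := by exact_mod_cast c1
      exact mul_le_mul_of_nonneg_right this pK.le
    calc (K.k:ℝ) * 2 ^ I.n = ((K.k * 2 ^ d : ℕ) : ℝ) * 2 ^ K.n := by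
          push_cast [hd, pow_add]; ring
      _ ≤ (I.k:ℝ) * 2 ^ K.n := this
  · rw [div_le_div_iff₀ pI pK]
    have h1 : ((I.k:ℝ) + 1) ≤ ((K.k + 1) * 2 ^ d : ℕ) := by
      push_cast
      exact_mod_cast c2
    calc ((I.k:ℝ) + 1) * 2 ^ K.n ≤ ((K.k + 1) * 2 ^ d : ℕ) * 2 ^ K.n :=
          mul_le_mul_of_nonneg_right h1 pK.le
      _ = ((K.k:ℝ) + 1) * 2 ^ I.n := by push_cast [hd, pow_add]; ring

lemma subset_or_subset_of_not_disjoint {I K : DI} (hnd : ¬ Disjoint I.carrier K.carrier) :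
    I.carrier ⊆ K.carrier ∨ K.carrier ⊆ I.carrier := by
  rcases le_total K.n I.n with h | h
  · exact Or.inl (subset_of_not_disjoint_of_n_le h hnd)
  · exact Or.inr (subset_of_not_disjoint_of_n_le h (fun hh => hnd hh.symm))



lemma exists_max {S : Set DI} {I : DI} (hI : I ∈ S) :
    ∃ J ∈ maxSet S, I.carrier ⊆ J.carrier := by
  classical
  have hP : ∃ m, ∃ J, J ∈ S ∧ I.carrier ⊆ J.carrier ∧ J.n = m := ⟨I.n, I, hI, subset_rfl, rfl⟩
  obtain ⟨J, hJS, hJsub, hJn⟩ := Nat.find_spec hP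
  refine ⟨J, ⟨hJS, ?_⟩, hJsub⟩
  intro K hK hsub
  have h2 : Nat.find hP ≤ K.n := Nat.find_min' hP ⟨K, hK, hJsub.trans hsub, rfl⟩
  exact DI.eq_of_subset_of_n_le hsub (by omega)

lemma maxSet_pairwise (S : Set DI) :
    (maxSet S).Pairwise fun I K => Disjoint I.carrier K.carrier := by
  intro I hI K hK hne
  by_contra hnd
  rcases subset_or_subset_of_not_disjoint hnd with h | h
  · exact hne (hI.2 K hK.1 h)
  · exact hne (hK.2 I hI.1 h).symm

lemma tsum_len_le_of_carleson {D : Set DI} {M : ENNReal} (hD : CarlesonLE D M) :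
    ∑' I : D, I.1.len ≤ M * covMeas D := by
  classical
  have hex : ∀ I : DI, I ∈ D → ∃ J, J ∈ maxSet D ∧ I.carrier ⊆ J.carrier := by
    intro I hI
    obtain ⟨J, hJ, hsub⟩ := exists_max hI
    exact ⟨J, hJ, hsub⟩
  choose f hf1 hf2 using hex
  calc ∑' I : D, I.1.len
      ≤ ∑' p : (Σ J : maxSet D, {I : DI // I ∈ D ∧ I.carrier ⊆ J.1.carrier}), p.2.1.len := by
        exact ENNReal.tsum_comp_le_tsum_of_injective
          (f := fun I : D => (⟨⟨f I.1 I.2, hf1 I.1 I.2⟩, ⟨I.1, I.2, hf2 I.1 I.2⟩⟩ :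
            Σ J : maxSet D, {I : DI // I ∈ D ∧ I.carrier ⊆ J.1.carrier}))
          (fun I I' hh => Subtype.ext (congrArg (fun p => p.2.1) hh))
          (fun p => p.2.1.len)
    _ = ∑' J : maxSet D, ∑' I : {I : DI // I ∈ D ∧ I.carrier ⊆ J.1.carrier}, I.1.len :=
        ENNReal.tsum_sigma' _
    _ = ∑' J : maxSet D, carlesonSum D J.1 := rfl
    _ ≤ ∑' J : maxSet D, M * J.1.len := ENNReal.tsum_le_tsum (fun J => hD J.1)
    _ = M * ∑' J : maxSet D, J.1.len := ENNReal.tsum_mul_left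
    _ = M * ∑' J : maxSet D, volume J.1.carrier := by
        congr 1; exact tsum_congr fun J => (DI.volume_carrier J.1).symm
    _ = M * volume (⋃ J : maxSet D, J.1.carrier) := by
        congr 1
        refine (measure_iUnion ?_ (fun J => J.1.measurableSet_carrier)).symm
        intro i j hij
        exact maxSet_pairwise D i.2 j.2 (fun h => hij (Subtype.ext h))
    _ ≤ M * covMeas D := by
        refine mul_le_mul_right (measure_mono ?_) M
        refine Set.iUnion_subset fun J => ?_
        exact Set.subset_biUnion_of_mem J.2.1

def Bset (τ : DI → DI) (A : ENNReal) (I₀ : DI) (Y : ENNReal) : Set DI :=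
  {I | I.carrier ⊆ I₀.carrier ∧ A * Y * I.len < (τ I).len * I₀.len}

def Cset (τ : DI → DI) (A : ENNReal) (I₀ : DI) (Y : ENNReal) : Set DI :=
  maxSet (Bset τ A I₀ Y)

def LsetX (τ : DI → DI) (A : ENNReal) (I₀ : DI) (Y : ENNReal) : Set DI :=
  {I : DI | I.carrier ⊆ I₀.carrier ∧ ∀ L ∈ Cset τ A I₀ Y, ¬ I.carrier ⊆ L.carrier}

lemma Bset_anti (τ : DI → DI) (A : ENNReal) (I₀ : DI) {Y Y' : ENNReal} (h : Y ≤ Y') :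
    Bset τ A I₀ Y' ⊆ Bset τ A I₀ Y := by
  intro I hI
  exact ⟨hI.1, lt_of_le_of_lt (mul_le_mul' (mul_le_mul' le_rfl h) le_rfl) hI.2⟩

lemma union_mono (τ : DI → DI) (A : ENNReal) (I₀ : DI) {Y Y' : ENNReal} (h : Y ≤ Y') :
    Cset τ A I₀ Y ∪ LsetX τ A I₀ Y ⊆ Cset τ A I₀ Y' ∪ LsetX τ A I₀ Y' := by
  intro I hI
  have hIsub : I.carrier ⊆ I₀.carrier := by
    rcases hI with hI | hI
    · exact hI.1.1
    · exact hI.1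
  by_cases hL : ∀ L ∈ Cset τ A I₀ Y', ¬ I.carrier ⊆ L.carrier
  · exact Or.inr ⟨hIsub, hL⟩
  push_neg at hL
  obtain ⟨J, hJ, hsub⟩ := hL
  have hJB : J ∈ Bset τ A I₀ Y := Bset_anti τ A I₀ h hJ.1
  rcases hI with hI | hI
  · -- I maximal in Bset Y, I ⊆ J ∈ Bset Y, so I = J ∈ Cset Y'
    exact Or.inl (hI.2 J hJB hsub ▸ hJ)
  · -- I ∈ LsetX Y: J ⊆ some maximal J' of Bset Y, so I ⊆ J', contradiction
    exfalso
    obtain ⟨J', hJ', hsub'⟩ := exists_max hJB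
    exact hI.2 J' hJ' (hsub.trans hsub')

noncomputable def hfun (τ : DI → DI) (A : ENNReal) (I₀ : DI) : ENNReal →o ENNReal :=
  ⟨fun Y => volume (⋃ I ∈ Cset τ A I₀ Y ∪ LsetX τ A I₀ Y, (τ I).carrier),
   fun Y Y' h => measure_mono (Set.biUnion_subset_biUnion_left (union_mono τ A I₀ h))⟩

lemma covMeas_image (τ : DI → DI) (S : Set DI) :
    covMeas (τ '' S) = volume (⋃ I ∈ S, (τ I).carrier) := by
  rw [covMeas, Set.biUnion_image]

/-- Main Lemma: if `⟦τ(E)⟧ ≤ M` for every collection `E` of pairwise disjoint dyadic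
intervals, then for `A ≥ 1` and `I₀` there is a pairwise disjoint collection `C` of
dyadic subintervals of `I₀` with `∑_{L∈C}|L| ≤ M|I₀|/A` and, for `L = Q(I₀) \ Q(C)`,
`|τ(I)|/|I| ≤ A (|τ(L)*| + |τ(C)*|)/|I₀|` for all `I ∈ L`. -/
theorem stmt5 (τ : DI → DI) (hτ : Function.Injective τ) (M : ENNReal)
    (hM : ∀ E : Set DI, (E.Pairwise fun I K => Disjoint I.carrier K.carrier) →
      CarlesonLE (τ '' E) M)
    (A : ENNReal) (hA : 1 ≤ A) (I₀ : DI) :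
    ∃ C : Set DI,
      (∀ L ∈ C, L.carrier ⊆ I₀.carrier) ∧
      (C.Pairwise fun I K => Disjoint I.carrier K.carrier) ∧
      (∑' L : C, L.1.len ≤ M * I₀.len / A) ∧
      ∀ I : DI, I.carrier ⊆ I₀.carrier → (∀ L ∈ C, ¬ I.carrier ⊆ L.carrier) →
        (τ I).len / I.len ≤
          A * (covMeas (τ '' {K : DI | K.carrier ⊆ I₀.carrier ∧
                ∀ L ∈ C, ¬ K.carrier ⊆ L.carrier}) +
              covMeas (τ '' C)) / I₀.len := by
  classical
  set Y := OrderHom.gfp (hfun τ A I₀) with hYdef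
  have hfix : volume (⋃ I ∈ Cset τ A I₀ Y ∪ LsetX τ A I₀ Y, (τ I).carrier) = Y :=
    OrderHom.map_gfp (hfun τ A I₀)
  set C := Cset τ A I₀ Y with hCdef
  set Ls := LsetX τ A I₀ Y with hLdef
  have hI0mem : I₀ ∈ C ∪ Ls := by
    by_cases hex : ∀ L ∈ C, ¬ I₀.carrier ⊆ L.carrier
    · exact Or.inr ⟨subset_rfl, hex⟩
    · push_neg at hex
      obtain ⟨J, hJ, hsub⟩ := hex
      have hJI : I₀ = J := DI.eq_of_subset_of_n_le hsub (DI.n_le_of_subset hJ.1.1)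
      exact Or.inl (hJI ▸ hJ)
  have hY0 : Y ≠ 0 := by
    intro h0
    have h1 : volume ((τ I₀).carrier) = 0 := by
      refine le_antisymm ?_ zero_le
      refine le_trans (measure_mono
        (Set.subset_biUnion_of_mem (u := fun I => (τ I).carrier) hI0mem)) ?_
      rw [hfix, h0]
    exact (τ I₀).len_ne_zero (by rw [← DI.volume_carrier]; exact h1)
  have hYtop : Y ≠ ⊤ := by
    intro htop
    have h1 : Y ≤ volume (Set.Ico (0:ℝ) 1) := by
      rw [← hfix]
      exact measure_mono (Set.iUnion₂_subset fun I _ => (τ I).carrier_subset_Ico01)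
    rw [htop, Real.volume_Ico, top_le_iff] at h1
    exact ENNReal.ofReal_ne_top h1
  have hCsubB : ∀ L ∈ C, L ∈ Bset τ A I₀ Y := fun L hL => hL.1
  have hCpair : C.Pairwise fun I K => Disjoint I.carrier K.carrier := maxSet_pairwise _
  have hCcov : covMeas (τ '' C) ≤ Y := by
    rw [covMeas_image, ← hfix]
    exact measure_mono (Set.biUnion_subset_biUnion_left Set.subset_union_left)
  have hYleS : Y ≤ covMeas (τ '' Ls) + covMeas (τ '' C) := by
    rw [covMeas_image, covMeas_image, ← hfix, Set.biUnion_union]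
    rw [add_comm]
    exact measure_union_le _ _
  have hA0 : A ≠ 0 := by intro h; rw [h] at hA; exact (not_le.2 zero_lt_one) hA
  refine ⟨C, fun L hL => (hCsubB L hL).1, hCpair, ?_, ?_⟩
  · -- Carleson packing bound
    have hsum1 : ∑' L : C, (τ L.1).len ≤ M * Y := by
      have e : ∑' L : C, (τ L.1).len = ∑' K : (τ '' C), K.1.len :=
        (tsum_image DI.len (hτ.injOn)).symm
      rw [e]
      exact le_trans (tsum_len_le_of_carleson (hM C hCpair)) (mul_le_mul_right hCcov M)
    have key : Y * (A * ∑' L : C, L.1.len) ≤ Y * (M * I₀.len) := by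
      calc Y * (A * ∑' L : C, L.1.len) = ∑' L : C, A * Y * L.1.len := by
            rw [ENNReal.tsum_mul_left]; ring
        _ ≤ ∑' L : C, (τ L.1).len * I₀.len :=
            ENNReal.tsum_le_tsum (fun L => (L.2.1.2).le)
        _ = (∑' L : C, (τ L.1).len) * I₀.len := ENNReal.tsum_mul_right
        _ ≤ (M * Y) * I₀.len := mul_le_mul_left hsum1 _
        _ = Y * (M * I₀.len) := by ring
    have key2 : A * ∑' L : C, L.1.len ≤ M * I₀.len :=
      (ENNReal.mul_le_mul_iff_right hY0 hYtop).1 key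
    rcases eq_or_ne A ⊤ with hAtop | hAtop
    · have hCemp : C = ∅ := by
        by_contra hne
        obtain ⟨L, hL⟩ := Set.nonempty_iff_ne_empty.2 hne
        have hlt := (hCsubB L hL).2
        rw [hAtop] at hlt
        have : (⊤ : ENNReal) * Y * L.len = ⊤ := by
          rw [ENNReal.top_mul hY0, ENNReal.top_mul L.len_ne_zero]
        rw [this] at hlt
        exact not_top_lt hlt
      haveI : IsEmpty ↥C := Set.isEmpty_coe_sort.2 hCemp
      rw [tsum_empty]
      exact zero_le
    · rw [ENNReal.le_div_iff_mul_le (Or.inl hA0) (Or.inl hAtop), mul_comm]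
      exact key2
  · -- pointwise bound
    intro I hIsub hInot
    have hIB : I ∉ Bset τ A I₀ Y := by
      intro hB
      obtain ⟨J, hJ, hsub⟩ := exists_max hB
      exact hInot J hJ hsub
    have hle : (τ I).len * I₀.len ≤ A * Y * I.len := by
      by_contra hlt
      exact hIB ⟨hIsub, not_le.1 hlt⟩
    set S := covMeas (τ '' {K : DI | K.carrier ⊆ I₀.carrier ∧
        ∀ L ∈ C, ¬ K.carrier ⊆ L.carrier}) + covMeas (τ '' C) with hSdef
    have hYS : Y ≤ S := hYleS
    have hle2 : (τ I).len * I₀.len ≤ A * S * I.len :=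
      le_trans hle (mul_le_mul_left (mul_le_mul_right hYS A) _)
    rw [ENNReal.div_le_iff I.len_ne_zero I.len_ne_top]
    have h3 : (τ I).len ≤ A * S * I.len / I₀.len :=
      (ENNReal.le_div_iff_mul_le (Or.inl I₀.len_ne_zero) (Or.inl I₀.len_ne_top)).2 hle2
    calc (τ I).len ≤ A * S * I.len / I₀.len := h3
      _ = A * S / I₀.len * I.len := by
          rw [div_eq_mul_inv, div_eq_mul_inv]; ring
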